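/- arXiv:math/0508149 — 2 statements merged into one kernel-verified Lean document; each statement's English description precedes it below -/
import Mathlib

section
/- Let π ∈ S_n and let S, T be totally ordered countable sets, and order S×T lexicographically. Then there is a bijection between the set A(π; S×T) of (S×T)-valued π-partitions and the disjoint union, over all factorizations σ·τ = π in S_n, of A(τ; S) × A(σ; T). -/
/-- `f` is a `π`-partition: viewing `π` as the labeled total order
`π₁ <_π π₂ <_π ⋯ <_π πₙ`, we require `f(π₁) ≤ f(π₂) ≤ ⋯ ≤ f(πₙ)` with strict
inequality `f(π_k) < f(π_{k+1})` whenever `k` is a descent (`π_k > π_{k+1}`). -/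
def IsPPartition {n : ℕ} {S : Type*} [LinearOrder S] (π : Equiv.Perm (Fin n))
    (f : Fin n → S) : Prop :=
  (∀ (k : ℕ) (h : k + 1 < n), f (π ⟨k, by omega⟩) ≤ f (π ⟨k + 1, h⟩)) ∧
  (∀ (k : ℕ) (h : k + 1 < n),
    π ⟨k + 1, h⟩ < π ⟨k, by omega⟩ → f (π ⟨k, by omega⟩) < f (π ⟨k + 1, h⟩))

namespace PPartitionAux

variable {n : ℕ}

lemma strictMono_of_adj {α : Type*} [Preorder α] {F : Fin n → α}
    (h : ∀ (k : ℕ) (hk : k + 1 < n), F ⟨k, by omega⟩ < F ⟨k + 1, hk⟩) :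
    StrictMono F := by
  cases n with
  | zero => exact fun a => a.elim0
  | succ m =>
    rw [Fin.strictMono_iff_lt_succ]
    intro i
    have := h i.1 (by omega)
    convert this using 2 <;> rfl

/-- `f` is a `π`-partition iff the key `k ↦ (f (π k), π k)` is strictly
increasing in the lexicographic order. -/
lemma isPP_iff {α : Type*} [LinearOrder α] (π : Equiv.Perm (Fin n)) (f : Fin n → α) :
    IsPPartition π f ↔ StrictMono (fun k : Fin n => toLex (f (π k), π k)) := by
  constructor
  · rintro ⟨h1, h2⟩
    apply strictMono_of_adj
    intro k hk
    have hle := h1 k hk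
    rcases eq_or_lt_of_le hle with he | hl
    · refine Prod.Lex.lt_iff.2 (Or.inr ⟨he, ?_⟩)
      have hne : π ⟨k, by omega⟩ ≠ π ⟨k + 1, hk⟩ := by
        intro hc
        have := π.injective hc
        simp [Fin.ext_iff] at this
      rcases lt_or_gt_of_ne hne with hlt | hgt
      · exact hlt
      · exact absurd (h2 k hk hgt) (by rw [he]; exact lt_irrefl _)
    · exact Prod.Lex.lt_iff.2 (Or.inl hl)
  · intro hF
    have hadj : ∀ (k : ℕ) (hk : k + 1 < n),
        toLex (f (π ⟨k, by omega⟩), π ⟨k, by omega⟩) <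
          toLex (f (π ⟨k + 1, hk⟩), π ⟨k + 1, hk⟩) := by
      intro k hk
      exact hF (show (⟨k, by omega⟩ : Fin n) < ⟨k + 1, hk⟩ by simp [Fin.lt_def])
    constructor
    · intro k hk
      rcases Prod.Lex.lt_iff.1 (hadj k hk) with h | ⟨he, _⟩
      · exact le_of_lt h
      · exact le_of_eq he
    · intro k hk hdesc
      rcases Prod.Lex.lt_iff.1 (hadj k hk) with h | ⟨_, hlt⟩
      · exact h
      · exact absurd hdesc (not_lt.2 (le_of_lt hlt))

/-- `f` is a `σ`-partition iff `σ` is the sorting permutation of `f`. -/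
lemma isPP_iff_sort {α : Type*} [LinearOrder α] (σ : Equiv.Perm (Fin n)) (f : Fin n → α) :
    IsPPartition σ f ↔ σ = Tuple.sort f := by
  rw [isPP_iff, Tuple.eq_sort_iff]
  constructor
  · intro h
    refine ⟨fun i j hij => ?_, fun i j hij hf => ?_⟩
    · rcases eq_or_lt_of_le hij with rfl | hlt
      · exact le_rfl
      · rcases Prod.Lex.lt_iff.1 (h hlt) with h' | ⟨h', _⟩
        · exact h'.le
        · exact h'.le
    · rcases Prod.Lex.lt_iff.1 (h hij) with h' | ⟨_, h'⟩
      · exact absurd hf h'.ne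
      · exact h'
  · rintro ⟨hm, ht⟩ i j hij
    rcases (hm hij.le).eq_or_lt with he | hl
    · exact Prod.Lex.lt_iff.2 (Or.inr ⟨he, ht i j hij he⟩)
    · exact Prod.Lex.lt_iff.2 (Or.inl hl)

lemma inv_lt_of_key {T : Type*} [LinearOrder T] {σ : Equiv.Perm (Fin n)} {h : Fin n → T}
    (hσ : StrictMono fun k : Fin n => toLex (h (σ k), σ k)) {a b : Fin n}
    (hab : toLex (h a, a) < toLex (h b, b)) : σ⁻¹ a < σ⁻¹ b := by
  by_contra hc
  push_neg at hc
  have := hσ.monotone hc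
  simp only [Equiv.Perm.coe_inv, Equiv.apply_symm_apply] at this
  exact absurd hab (not_lt.2 this)

/-- Forward direction: if `(g, h)` (zipped) is a `π`-partition for the lex order and `h` is
a `σ`-partition, then `g ∘ σ` is a `σ⁻¹π`-partition. -/
lemma lemA {S T : Type*} [LinearOrder S] [LinearOrder T]
    (π σ : Equiv.Perm (Fin n)) (g : Fin n → S) (h : Fin n → T)
    (hf : IsPPartition π (fun i => toLex (g i, h i)))
    (hσ : IsPPartition σ h) :
    IsPPartition (σ⁻¹ * π) (fun i => g (σ i)) := by
  rw [isPP_iff] at hf hσ ⊢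
  intro p q hpq
  have hK := hf hpq
  simp only [Equiv.Perm.mul_apply, Equiv.Perm.coe_inv, Equiv.apply_symm_apply]
  rcases Prod.Lex.lt_iff.1 hK with h1 | ⟨h1, h2⟩
  · rcases Prod.Lex.lt_iff.1 h1 with h3 | ⟨h3, h4⟩
    · exact Prod.Lex.lt_iff.2 (Or.inl h3)
    · refine Prod.Lex.lt_iff.2 (Or.inr ⟨h3, ?_⟩)
      exact inv_lt_of_key hσ (Prod.Lex.lt_iff.2 (Or.inl h4))
  · have hg : g (π p) = g (π q) := congrArg (fun x => (ofLex x).1) h1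
    have hh : h (π p) = h (π q) := congrArg (fun x => (ofLex x).2) h1
    refine Prod.Lex.lt_iff.2 (Or.inr ⟨hg, ?_⟩)
    exact inv_lt_of_key hσ (Prod.Lex.lt_iff.2 (Or.inr ⟨hh, h2⟩))

/-- Backward direction: if `G` is a `τ`-partition and `h` is a `σ`-partition, then
`i ↦ (G (σ⁻¹ i), h i)` is a `στ`-partition for the lex order. -/
lemma lemB {S T : Type*} [LinearOrder S] [LinearOrder T]
    (σ τ : Equiv.Perm (Fin n)) (G : Fin n → S) (h : Fin n → T)
    (hG : IsPPartition τ G) (hh : IsPPartition σ h) :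
    IsPPartition (σ * τ) (fun i => toLex (G (σ⁻¹ i), h i)) := by
  rw [isPP_iff] at hG hh ⊢
  intro p q hpq
  simp only [Equiv.Perm.mul_apply, Equiv.Perm.coe_inv, Equiv.symm_apply_apply]
  rcases Prod.Lex.lt_iff.1 (hG hpq) with h1 | ⟨h1, h2⟩
  · exact Prod.Lex.lt_iff.2 (Or.inl (Prod.Lex.lt_iff.2 (Or.inl h1)))
  · rcases Prod.Lex.lt_iff.1 (hh h2) with h3 | ⟨h3, h4⟩
    · exact Prod.Lex.lt_iff.2 (Or.inl (Prod.Lex.lt_iff.2 (Or.inr ⟨h1, h3⟩)))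
    · refine Prod.Lex.lt_iff.2 (Or.inr ⟨?_, h4⟩)
      show toLex (G (τ p), h (σ (τ p))) = toLex (G (τ q), h (σ (τ q)))
      have h1' : G (τ p) = G (τ q) := h1
      have h3' : h (σ (τ p)) = h (σ (τ q)) := h3
      rw [h1', h3']

end PPartitionAux

open PPartitionAux in
/-- Gessel's fundamental bijection: for totally ordered countable sets `S`, `T`,
with `S × T` ordered lexicographically,
`A(π; S×T) ↔ ∐_{στ = π} A(τ; S) × A(σ; T)`. -/
theorem ppartition_bijection (n : ℕ) (π : Equiv.Perm (Fin n))
    (S T : Type) [LinearOrder S] [LinearOrder T] [Countable S] [Countable T] :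
    Nonempty
      ({f : Fin n → S ×ₗ T // IsPPartition π f} ≃
        Σ p : {p : Equiv.Perm (Fin n) × Equiv.Perm (Fin n) // p.1 * p.2 = π},
          {f : Fin n → S // IsPPartition p.1.2 f} ×
            {f : Fin n → T // IsPPartition p.1.1 f}) := by
  constructor
  refine
    { toFun := fun fp =>
        ⟨⟨(Tuple.sort (fun i => (ofLex (fp.1 i)).2),
            (Tuple.sort (fun i => (ofLex (fp.1 i)).2))⁻¹ * π), mul_inv_cancel_left _ _⟩,
          ⟨fun i => (ofLex (fp.1 (Tuple.sort (fun i => (ofLex (fp.1 i)).2) i))).1,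
            lemA π _ _ _ fp.2 ((isPP_iff_sort _ _).2 rfl)⟩,
          ⟨fun i => (ofLex (fp.1 i)).2, (isPP_iff_sort _ _).2 rfl⟩⟩,
      invFun := fun x =>
        ⟨fun i => toLex (x.2.1.1 ((x.1.1).1⁻¹ i), x.2.2.1 i), by
          obtain ⟨⟨⟨σ, τ⟩, hστ⟩, ⟨G, hG⟩, ⟨h, hh⟩⟩ := x
          have hστ' : σ * τ = π := hστ
          show IsPPartition π fun i => toLex (G (σ⁻¹ i), h i)
          rw [← hστ']
          exact lemB σ τ G h hG hh⟩,
      left_inv := ?_,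
      right_inv := ?_ }
  · rintro ⟨f, hf⟩
    apply Subtype.ext
    funext i
    show toLex ((ofLex (f (Tuple.sort _ ((Tuple.sort _)⁻¹ i)))).1, (ofLex (f i)).2) = f i
    rw [Equiv.Perm.coe_inv, Equiv.apply_symm_apply]
    rfl
  · rintro ⟨⟨⟨σ, τ⟩, hστ⟩, ⟨G, hG⟩, ⟨h, hh⟩⟩
    have e : σ = Tuple.sort h := (isPP_iff_sort σ h).1 hh
    subst e
    have eτ : τ = (Tuple.sort h)⁻¹ * π := by rw [← hστ, inv_mul_cancel_left]
    subst eτ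
    apply Sigma.ext
    · exact Subtype.ext rfl
    · apply heq_of_eq
      refine Prod.ext (Subtype.ext ?_) (Subtype.ext ?_)
      · funext i
        show G ((Tuple.sort h)⁻¹ (Tuple.sort h i)) = G i
        rw [Equiv.Perm.coe_inv, Equiv.symm_apply_apply]
      · rfl
end

section
/- The structure constant a_{α,β}^γ, defined as the number of pairs (σ,τ) ∈ S_n × S_n with C(σ)=α, C(τ)=β, and στ = π for a fixed permutation π with C(π)=γ, depends only on γ and not on the choice of π. -/
def incRuns {α : Type*} [LinearOrder α] : List α → List ℕ
  | [] => []
  | [_] => [1]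
  | a :: b :: l =>
    let r := incRuns (b :: l)
    if a < b then (r.headI + 1) :: r.tail else 1 :: r

/-- The descent composition of a permutation of `Fin n`. -/
def descComp {n : ℕ} (π : Equiv.Perm (Fin n)) : List ℕ :=
  incRuns (List.ofFn fun i => π i)


namespace SCWD
variable {β : Type*} [LinearOrder β]

def pat : List β → List Bool
  | [] => []
  | [_] => []
  | a :: b :: l => decide (a < b) :: pat (b :: l)

def runsOf : List Bool → List ℕ
  | [] => [1]
  | true :: p => ((runsOf p).headI + 1) :: (runsOf p).tail
  | false :: p => 1 :: runsOf p

def patOf : List ℕ → List Bool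
  | [] => []
  | a :: r => List.replicate (a-1) true ++ (if r.isEmpty then [] else false :: patOf r)

lemma incRuns_ne_nil : ∀ (l : List β), l ≠ [] → incRuns l ≠ []
  | [a], _ => by simp [incRuns]
  | a :: b :: l, _ => by
    rw [incRuns]
    split
    · simp
    · simp

lemma incRuns_headI_pos : ∀ (l : List β), l ≠ [] → 1 ≤ (incRuns l).headI
  | [a], _ => by simp [incRuns]
  | a :: b :: l, _ => by
    rw [incRuns]
    split
    · simp
    · simp

lemma incRuns_eq_runsOf : ∀ (l : List β), l ≠ [] → incRuns l = runsOf (pat l)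
  | [a], _ => rfl
  | a :: b :: l, _ => by
    rw [incRuns, pat, incRuns_eq_runsOf (b :: l) (by simp)]
    by_cases h : a < b
    · simp [h, runsOf]
    · simp [h, runsOf]

lemma patOf_cons_eq (c : ℕ) (t : List ℕ) :
    patOf (c :: t) = List.replicate (c-1) true ++ (if t = [] then [] else false :: patOf t) := by
  rw [patOf]; cases t <;> simp

lemma patOf_succ (c : ℕ) (t : List ℕ) (hc : 1 ≤ c) :
    patOf ((c+1) :: t) = true :: patOf (c :: t) := by
  rw [patOf_cons_eq, patOf_cons_eq]
  have : c + 1 - 1 = (c - 1) + 1 := by omega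
  rw [this, List.replicate_succ]
  simp

lemma pat_eq_patOf : ∀ (l : List β), l ≠ [] → pat l = patOf (incRuns l)
  | [a], _ => rfl
  | a :: b :: l, _ => by
    have hne := incRuns_ne_nil (b :: l) (by simp)
    have hpos := incRuns_headI_pos (b :: l) (by simp)
    obtain ⟨c, t, hct⟩ := List.exists_cons_of_ne_nil hne
    have hc : 1 ≤ c := by rw [hct] at hpos; simpa using hpos
    rw [incRuns, pat, pat_eq_patOf (b :: l) (by simp), hct]
    by_cases h : a < b
    · simp only [if_pos h, List.headI, List.tail]
      rw [patOf_succ c t hc]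
      simp [h]
    · simp only [if_neg h]
      rw [patOf_cons_eq 1]
      simp [h, hct, patOf]

lemma pat_length : ∀ (l : List β), (pat l).length = l.length - 1
  | [] => rfl
  | [_] => rfl
  | a :: b :: l => by rw [pat]; simp [pat_length (b :: l)]

lemma pat_getElem : ∀ (l : List β) (i : ℕ) (h : i+1 < l.length),
    (pat l)[i]'(by rw [pat_length]; omega) = decide (l[i]'(by omega) < l[i+1]'h)
  | a :: b :: l, 0, h => rfl
  | a :: b :: l, (i+1), h => by
    show (decide (a < b) :: pat (b :: l))[i+1]'(by simp only [pat_length, List.length_cons] at h ⊢; omega) = _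
    exact pat_getElem (b :: l) i (by simp only [List.length_cons] at h ⊢; omega)

variable {n : ℕ}

def wd (σ : Equiv.Perm (Fin n)) : List (Fin n) := List.ofFn fun i => σ i

lemma wd_length (σ : Equiv.Perm (Fin n)) : (wd σ).length = n := by simp [wd]

def desAt (σ : Equiv.Perm (Fin n)) (i : Fin n) : Bool :=
  if h : (i:ℕ)+1 < n then decide (σ ⟨(i:ℕ)+1, h⟩ < σ i) else false

def Des (σ : Equiv.Perm (Fin n)) : Finset (Fin n) :=
  Finset.univ.filter (fun i => desAt σ i = true)

lemma mem_Des {σ : Equiv.Perm (Fin n)} {i : Fin n} : i ∈ Des σ ↔ desAt σ i = true := by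
  simp [Des]

lemma pat_wd_getElem (σ : Equiv.Perm (Fin n)) (i : ℕ) (h : i+1 < n) :
    (pat (wd σ))[i]'(by rw [pat_length, wd_length]; omega)
      = decide (σ ⟨i, by omega⟩ < σ ⟨i+1, h⟩) := by
  rw [pat_getElem (wd σ) i (by rw [wd_length]; omega)]
  simp [wd]

lemma desAt_eq_not_pat (σ : Equiv.Perm (Fin n)) (i : ℕ) (h : i+1 < n) :
    desAt σ ⟨i, by omega⟩ = !((pat (wd σ))[i]'(by rw [pat_length, wd_length]; omega)) := by
  rw [pat_wd_getElem σ i h, desAt]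
  rw [dif_pos h]
  rcases lt_trichotomy (σ ⟨i, by omega⟩) (σ ⟨i+1, h⟩) with hlt | heq | hgt
  · simp [hlt, not_lt_of_gt hlt, le_of_lt hlt]
  · exact absurd (σ.injective heq) (by simp [Fin.ext_iff])
  · simp [hgt, not_lt_of_gt hgt, le_of_lt hgt]

lemma desAt_eq_of_pat_eq {σ σ' : Equiv.Perm (Fin n)} (hp : pat (wd σ) = pat (wd σ')) :
    desAt σ = desAt σ' := by
  funext i
  by_cases h : (i:ℕ)+1 < n
  · have h1 := desAt_eq_not_pat σ i h
    have h2 := desAt_eq_not_pat σ' i h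
    have hi : (⟨(i:ℕ), by omega⟩ : Fin n) = i := by simp [Fin.ext_iff]
    rw [hi] at h1 h2
    rw [h1, h2]
    congr 1
    exact List.getElem_of_eq hp _
  · simp [desAt, h]

lemma pat_eq_of_desAt_eq {σ σ' : Equiv.Perm (Fin n)} (hd : desAt σ = desAt σ') :
    pat (wd σ) = pat (wd σ') := by
  apply List.ext_getElem
  · simp [pat_length, wd_length]
  · intro i h1 h2
    have h : i + 1 < n := by rw [pat_length, wd_length] at h1; omega
    have e1 := desAt_eq_not_pat σ i h
    have e2 := desAt_eq_not_pat σ' i h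
    rw [hd] at e1
    rw [e1] at e2
    exact Bool.not_inj e2

lemma desAt_eq_of_Des_eq {σ σ' : Equiv.Perm (Fin n)} (hD : Des σ = Des σ') :
    desAt σ = desAt σ' := by
  funext i
  have := Finset.ext_iff.mp hD i
  simp only [mem_Des] at this
  rw [Bool.eq_iff_iff]
  exact this

lemma descComp_eq_of_Des_eq {σ σ' : Equiv.Perm (Fin n)} (hD : Des σ = Des σ') :
    descComp σ = descComp σ' := by
  rcases Nat.eq_zero_or_pos n with h0 | hn
  · have e1 : wd σ = [] := List.eq_nil_of_length_eq_zero (by rw [wd_length, h0])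
    have e2 : wd σ' = [] := List.eq_nil_of_length_eq_zero (by rw [wd_length, h0])
    show incRuns (wd σ) = incRuns (wd σ')
    rw [e1, e2]
  · have hne : wd σ ≠ [] := by
      intro h; have := wd_length σ; rw [h] at this; simp at this; omega
    have hne' : wd σ' ≠ [] := by
      intro h; have := wd_length σ'; rw [h] at this; simp at this; omega
    show incRuns (wd σ) = incRuns (wd σ')
    rw [incRuns_eq_runsOf _ hne, incRuns_eq_runsOf _ hne',
      pat_eq_of_desAt_eq (desAt_eq_of_Des_eq hD)]

lemma Des_eq_of_descComp_eq {σ σ' : Equiv.Perm (Fin n)} (h : descComp σ = descComp σ') :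
    Des σ = Des σ' := by
  rcases Nat.eq_zero_or_pos n with h0 | hn
  · ext i
    exact absurd i.isLt (by omega)
  · have hne : wd σ ≠ [] := by
      intro hh; have := wd_length σ; rw [hh] at this; simp at this; omega
    have hne' : wd σ' ≠ [] := by
      intro hh; have := wd_length σ'; rw [hh] at this; simp at this; omega
    have hp : pat (wd σ) = pat (wd σ') := by
      rw [pat_eq_patOf _ hne, pat_eq_patOf _ hne']
      show patOf (descComp σ) = patOf (descComp σ')
      rw [h]
    ext i
    simp only [mem_Des]
    rw [desAt_eq_of_pat_eq hp]

open Finset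

def rkN {κ : Type*} [LinearOrder κ] (K : Fin n → κ) (i : Fin n) : ℕ :=
  (univ.filter fun j => K j < K i).card

lemma rkN_lt {κ : Type*} [LinearOrder κ] (K : Fin n → κ) (i : Fin n) : rkN K i < n := by
  have hss : (univ.filter fun j => K j < K i) ⊂ univ :=
    (Finset.ssubset_iff_of_subset (subset_univ _)).mpr ⟨i, mem_univ _, by simp⟩
  simpa [rkN] using Finset.card_lt_card hss

def rkF {κ : Type*} [LinearOrder κ] (K : Fin n → κ) (i : Fin n) : Fin n :=
  ⟨rkN K i, rkN_lt K i⟩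

lemma rkN_lt_rkN {κ : Type*} [LinearOrder κ] {K : Fin n → κ} {i j : Fin n}
    (h : K i < K j) : rkN K i < rkN K j := by
  apply Finset.card_lt_card
  refine (Finset.ssubset_iff_of_subset ?_).mpr ⟨i, by simp [h], by simp⟩
  intro l hl
  simp only [mem_filter, mem_univ, true_and] at hl ⊢
  exact lt_trans hl h

lemma rkN_lt_iff {κ : Type*} [LinearOrder κ] {K : Fin n → κ}
    (hK : Function.Injective K) {i j : Fin n} : rkN K i < rkN K j ↔ K i < K j := by
  constructor
  · intro h
    rcases lt_trichotomy (K i) (K j) with h1 | h1 | h1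
    · exact h1
    · rw [hK h1] at h; omega
    · exact absurd (rkN_lt_rkN h1) (by omega)
  · exact rkN_lt_rkN

lemma rkF_bijective {κ : Type*} [LinearOrder κ] {K : Fin n → κ}
    (hK : Function.Injective K) : Function.Bijective (rkF K) := by
  rw [Fintype.bijective_iff_injective_and_card]
  refine ⟨fun i j hij => ?_, rfl⟩
  rcases lt_trichotomy (K i) (K j) with h1 | h1 | h1
  · have := rkN_lt_rkN h1
    simp [rkF, Fin.ext_iff] at hij; omega
  · exact hK h1
  · have := rkN_lt_rkN h1
    simp [rkF, Fin.ext_iff] at hij; omega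

lemma card_filter_lt_perm (τ : Equiv.Perm (Fin n)) (i : Fin n) :
    (univ.filter fun j => τ j < τ i).card = (τ i : ℕ) := by
  have : (univ.filter fun j => τ j < τ i) = (Finset.Iio (τ i)).map τ.symm.toEmbedding := by
    ext l
    simp only [mem_filter, mem_univ, true_and, Finset.mem_map, Finset.mem_Iio,
      Equiv.coe_toEmbedding]
    constructor
    · intro h; exact ⟨τ l, h, τ.symm_apply_apply l⟩
    · rintro ⟨p, hp, rfl⟩; simpa using hp
  rw [this, Finset.card_map, Fin.card_Iio]

-- blocks
def blkN (S : Finset (Fin n)) (p : Fin n) : ℕ := (S.filter fun s => s < p).card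

lemma blkN_lt (S : Finset (Fin n)) (p : Fin n) : blkN S p < n := by
  have h1 : (S.filter fun s => s < p) ⊆ Finset.Iio p := by
    intro s hs; simp only [Finset.mem_Iio]; exact (Finset.mem_filter.mp hs).2
  have := Finset.card_le_card h1
  rw [Fin.card_Iio] at this
  exact lt_of_le_of_lt this p.isLt

def blkF (S : Finset (Fin n)) (p : Fin n) : Fin n := ⟨blkN S p, blkN_lt S p⟩

lemma blkF_mono (S : Finset (Fin n)) {p q : Fin n} (h : p ≤ q) : blkF S p ≤ blkF S q := by
  apply Finset.card_le_card
  intro s hs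
  simp only [Finset.mem_filter] at hs ⊢
  exact ⟨hs.1, lt_of_lt_of_le hs.2 h⟩

lemma blkF_succ_eq (S : Finset (Fin n)) (p : Fin n) (h : (p:ℕ)+1 < n) (hp : p ∉ S) :
    blkF S p = blkF S ⟨(p:ℕ)+1, h⟩ := by
  have : (S.filter fun s => s < p) = (S.filter fun s => s < ⟨(p:ℕ)+1, h⟩) := by
    ext s
    simp only [Finset.mem_filter, and_congr_right_iff]
    intro hsS
    constructor
    · intro hlt
      exact lt_trans hlt (by simp [Fin.lt_def])
    · intro hlt
      have hs1 : (s:ℕ) < (p:ℕ)+1 := by simpa [Fin.lt_def] using hlt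
      rcases lt_or_eq_of_le (show s ≤ p from Fin.le_def.mpr (by omega)) with h' | h'
      · exact h'
      · exact absurd (h' ▸ hsS) hp
  simp [blkF, blkN, this]

lemma asc_of_not_mem_Des (σ : Equiv.Perm (Fin n)) (i : Fin n) (h : (i:ℕ)+1 < n)
    (hi : i ∉ Des σ) : σ i < σ ⟨(i:ℕ)+1, h⟩ := by
  rw [mem_Des, desAt, dif_pos h] at hi
  simp only [decide_eq_true_eq] at hi
  rcases lt_trichotomy (σ i) (σ ⟨(i:ℕ)+1, h⟩) with h1 | h1 | h1
  · exact h1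
  · exact absurd (σ.injective h1) (by simp [Fin.ext_iff])
  · exact absurd h1 hi

lemma increasing_on_block {S : Finset (Fin n)} {σ : Equiv.Perm (Fin n)}
    (hD : Des σ ⊆ S) {p q : Fin n} (hb : blkF S p = blkF S q) (hpq : p < q) :
    σ p < σ q := by
  have hcard : (S.filter fun s => s < q).card ≤ (S.filter fun s => s < p).card := by
    have := congrArg Fin.val hb
    simp only [blkF, blkN] at this
    omega
  have hfe : (S.filter fun s => s < p) = (S.filter fun s => s < q) := by
    apply Finset.eq_of_subset_of_card_le _ hcard
    intro s hs
    simp only [Finset.mem_filter] at hs ⊢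
    exact ⟨hs.1, lt_trans hs.2 hpq⟩
  have hstep : ∀ r : Fin n, p ≤ r → r < q → r ∉ S := by
    intro r hpr hrq hrS
    have : r ∈ S.filter fun s => s < p := by
      rw [hfe]; exact Finset.mem_filter.mpr ⟨hrS, hrq⟩
    have := (Finset.mem_filter.mp this).2
    exact absurd (lt_of_le_of_lt hpr this) (lt_irrefl p)
  have key : ∀ m : ℕ, ∀ hm : (p:ℕ) + m + 1 ≤ (q:ℕ),
      σ p < σ ⟨(p:ℕ) + m + 1, by have := q.isLt; omega⟩ := by
    intro m
    induction m with
    | zero =>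
      intro hm
      have hpn : (p:ℕ) + 1 < n := by have := q.isLt; omega
      have hpS : p ∉ S := hstep p le_rfl hpq
      have hpD : p ∉ Des σ := fun hmem => hpS (hD hmem)
      have := asc_of_not_mem_Des σ p hpn hpD
      convert this using 3
    | succ m ih =>
      intro hm
      have hm' : (p:ℕ) + m + 1 ≤ (q:ℕ) := by omega
      have ihv := ih hm'
      set r : Fin n := ⟨(p:ℕ) + m + 1, by have := q.isLt; omega⟩ with hr
      have hrn : (r:ℕ) + 1 < n := by have := q.isLt; simp [hr]; omega
      have hrS : r ∉ S := hstep r (by simp [Fin.le_def, hr]; omega) (by simp [Fin.lt_def, hr]; omega)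
      have hrD : r ∉ Des σ := fun hmem => hrS (hD hmem)
      have hstep2 := asc_of_not_mem_Des σ r hrn hrD
      have : σ ⟨(r:ℕ)+1, hrn⟩ = σ ⟨(p:ℕ) + (m+1) + 1, by omega⟩ := rfl
      rw [this] at hstep2
      exact lt_trans ihv hstep2
  have hq : q = ⟨(p:ℕ) + ((q:ℕ) - (p:ℕ) - 1) + 1, by have := q.isLt; have := Fin.lt_def.mp hpq; omega⟩ := by
    simp [Fin.ext_iff]
    have := Fin.lt_def.mp hpq
    omega
  rw [hq]
  exact key _ (by have := Fin.lt_def.mp hpq; omega)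

lemma card_filter_comp_eq {f h : Fin n → Fin n}
    (hfib : ∀ j, (univ.filter fun i => f i = j).card = (univ.filter fun p => h p = j).card)
    (Q : Fin n → Prop) [DecidablePred Q] :
    (univ.filter fun i => Q (f i)).card = (univ.filter fun p => Q (h p)).card := by
  have gen : ∀ (f : Fin n → Fin n),
      (univ.filter fun i => Q (f i)).card
        = ∑ b ∈ univ.filter Q, (univ.filter fun i => f i = b).card := by
    intro f
    rw [Finset.card_eq_sum_card_fiberwise
      (f := f) (t := univ.filter Q)
      (fun i hi => by
        simp only [Finset.mem_coe, mem_filter, mem_univ, true_and] at hi ⊢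
        exact hi)]
    apply Finset.sum_congr rfl
    intro b hb
    congr 1
    ext i
    simp only [mem_filter, mem_univ, true_and]
    constructor
    · rintro ⟨_, he⟩; exact he
    · intro he
      exact ⟨he ▸ (Finset.mem_filter.mp hb).2, he⟩
  rw [gen f, gen h]
  exact Finset.sum_congr rfl (fun b _ => hfib b)

lemma blkF_eq_of_between (S : Finset (Fin n)) {j q : Fin n}
    (hlow : (univ.filter fun p => blkF S p < j).card ≤ (q:ℕ))
    (hhigh : (q:ℕ) < (univ.filter fun p => blkF S p ≤ j).card) : blkF S q = j := by
  have h1 : ¬ blkF S q < j := by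
    intro hlt
    have hsub : Finset.Iic q ⊆ univ.filter fun p => blkF S p < j := by
      intro p hp
      simp only [Finset.mem_Iic] at hp
      simp only [mem_filter, mem_univ, true_and]
      exact lt_of_le_of_lt (blkF_mono S hp) hlt
    have := Finset.card_le_card hsub
    rw [Fin.card_Iic] at this
    omega
  have h2 : ¬ j < blkF S q := by
    intro hlt
    have hsub : (univ.filter fun p => blkF S p ≤ j) ⊆ Finset.Iio q := by
      intro p hp
      simp only [mem_filter, mem_univ, true_and] at hp
      simp only [Finset.mem_Iio]
      by_contra hq
      push_neg at hq
      exact absurd (le_trans (blkF_mono S hq) hp) (not_le_of_gt hlt)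
    have := Finset.card_le_card hsub
    rw [Fin.card_Iio] at this
    omega
  exact le_antisymm (not_lt.mp h2) (not_lt.mp h1)

lemma of_mem_Des {σ : Equiv.Perm (Fin n)} {i : Fin n} (h : i ∈ Des σ) :
    ∃ hh : (i:ℕ)+1 < n, σ ⟨(i:ℕ)+1, hh⟩ < σ i := by
  rw [mem_Des, desAt] at h
  by_cases hh : (i:ℕ)+1 < n
  · rw [dif_pos hh] at h
    exact ⟨hh, by simpa using h⟩
  · rw [dif_neg hh] at h
    simp at h

def PairsE (S T : Finset (Fin n)) (π : Equiv.Perm (Fin n)) :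
    Finset (Equiv.Perm (Fin n) × Equiv.Perm (Fin n)) :=
  univ.filter (fun pr => Des pr.1 = S ∧ Des pr.2 = T ∧ pr.1 * pr.2 = π)

def PairsLE (S T : Finset (Fin n)) (π : Equiv.Perm (Fin n)) :
    Finset (Equiv.Perm (Fin n) × Equiv.Perm (Fin n)) :=
  univ.filter (fun pr => Des pr.1 ⊆ S ∧ Des pr.2 ⊆ T ∧ pr.1 * pr.2 = π)

def Gok (S T D : Finset (Fin n)) (g : Fin n → Fin n) : Prop :=
  (∀ j, (univ.filter fun i => g i = j).card = (univ.filter fun p => blkF S p = j).card) ∧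
  (∀ i j : Fin n, (j:ℕ) = (i:ℕ)+1 → i ∉ T → g i < g j ∨ (g i = g j ∧ i ∉ D))

instance (S T D : Finset (Fin n)) (g : Fin n → Fin n) : Decidable (Gok S T D g) := by
  unfold Gok; infer_instance

def Gset (S T D : Finset (Fin n)) : Finset (Fin n → Fin n) :=
  univ.filter (Gok S T D)

lemma pair_order_iff {S : Finset (Fin n)} {π σ τ : Equiv.Perm (Fin n)}
    (hσ : Des σ ⊆ S) (hmul : σ * τ = π) (j i : Fin n) :
    τ j < τ i ↔ (blkF S (τ j) < blkF S (τ i) ∨ (blkF S (τ j) = blkF S (τ i) ∧ π j < π i)) := by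
  have hπ : ∀ l, π l = σ (τ l) := fun l => by rw [← hmul]; rfl
  constructor
  · intro h
    rcases lt_or_eq_of_le (blkF_mono S (le_of_lt h)) with hb | hb
    · exact Or.inl hb
    · exact Or.inr ⟨hb, by rw [hπ, hπ]; exact increasing_on_block hσ hb h⟩
  · rintro (hb | ⟨hb, hv⟩)
    · by_contra hle
      push_neg at hle
      exact absurd (blkF_mono S hle) (not_le_of_gt hb)
    · rcases lt_trichotomy (τ j) (τ i) with h | h | h
      · exact h
      · exact absurd hv (by rw [τ.injective h]; exact lt_irrefl _)
      · have := increasing_on_block hσ hb.symm h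
        rw [← hπ, ← hπ] at this
        exact absurd hv (asymm this)

lemma pair_apply_eq {S : Finset (Fin n)} {π σ τ : Equiv.Perm (Fin n)}
    (hσ : Des σ ⊆ S) (hmul : σ * τ = π) (i : Fin n) :
    (τ i : ℕ) = (univ.filter fun l =>
      toLex (blkF S (τ l), π l) < toLex (blkF S (τ i), π i)).card := by
  rw [← card_filter_lt_perm τ i]
  apply Finset.card_bij (fun l _ => l)
  · intro l hl
    simp only [mem_filter, mem_univ, true_and] at hl ⊢
    rw [Prod.Lex.lt_iff]
    exact (pair_order_iff hσ hmul l i).mp hl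
  · intro a b _ _ h; exact h
  · intro l hl
    refine ⟨l, ?_, rfl⟩
    simp only [mem_filter, mem_univ, true_and] at hl ⊢
    rw [Prod.Lex.lt_iff] at hl
    exact (pair_order_iff hσ hmul l i).mpr hl

lemma card_PairsLE_eq (S T : Finset (Fin n)) (π : Equiv.Perm (Fin n)) :
    (PairsLE S T π).card = (Gset S T (Des π)).card := by
  apply Finset.card_bij (fun pr _ => fun i => blkF S (pr.2 i))
  · -- membership
    rintro ⟨σ, τ⟩ hpr
    rw [PairsLE, mem_filter] at hpr
    obtain ⟨-, hσ, hτ, hmul⟩ := hpr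
    rw [Gset, mem_filter]
    refine ⟨mem_univ _, ?_, ?_⟩
    · intro j
      apply Finset.card_bij (fun i _ => τ i)
      · intro i hi
        simp only [mem_filter, mem_univ, true_and] at hi ⊢
        exact hi
      · intro a b _ _ h; exact τ.injective h
      · intro p hp
        refine ⟨τ.symm p, ?_, by simp⟩
        simp only [mem_filter, mem_univ, true_and] at hp ⊢
        simpa using hp
    · intro i j hj hiT
      have hj1 : (i:ℕ)+1 < n := hj ▸ j.isLt
      have hij : j = ⟨(i:ℕ)+1, hj1⟩ := Fin.ext hj
      have hiD : i ∉ Des τ := fun hmem => hiT (hτ hmem)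
      have hlt : τ i < τ j := by
        rw [hij]; exact asc_of_not_mem_Des τ i hj1 hiD
      rcases lt_or_eq_of_le (blkF_mono S (le_of_lt hlt)) with hb | hb
      · exact Or.inl hb
      · refine Or.inr ⟨hb, ?_⟩
        intro hmem
        obtain ⟨hh, hdes⟩ := of_mem_Des hmem
        have hπ : ∀ l, π l = σ (τ l) := fun l => by rw [← hmul]; rfl
        have : π i < π j := by
          rw [hπ, hπ]; exact increasing_on_block hσ hb hlt
        rw [hij] at this
        exact absurd this (asymm (by exact_mod_cast hdes))
  · -- injectivity
    rintro ⟨σ₁, τ₁⟩ h1 ⟨σ₂, τ₂⟩ h2 heq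
    rw [PairsLE, mem_filter] at h1 h2
    obtain ⟨-, hσ1, -, hmul1⟩ := h1
    obtain ⟨-, hσ2, -, hmul2⟩ := h2
    have hg : ∀ l, blkF S (τ₁ l) = blkF S (τ₂ l) := fun l => congrFun heq l
    have hτ : τ₁ = τ₂ := by
      apply Equiv.ext
      intro i
      apply Fin.ext
      rw [pair_apply_eq hσ1 hmul1 i, pair_apply_eq hσ2 hmul2 i]
      apply Finset.card_bij (fun l _ => l)
      · intro l hl
        simp only [mem_filter, mem_univ, true_and] at hl ⊢
        rw [← hg, ← hg]
        exact hl
      · intro a b _ _ h; exact h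
      · intro l hl
        refine ⟨l, ?_, rfl⟩
        simp only [mem_filter, mem_univ, true_and] at hl ⊢
        rw [hg, hg]
        exact hl
    have hσ : σ₁ = σ₂ := by
      have e1 : σ₁ = π * τ₁⁻¹ := by rw [← hmul1]; group
      have e2 : σ₂ = π * τ₂⁻¹ := by rw [← hmul2]; group
      rw [e1, e2, hτ]
    exact Prod.ext hσ hτ
  · -- surjectivity
    intro g hgmem
    rw [Gset, mem_filter] at hgmem
    obtain ⟨-, hfib, hadj⟩ := hgmem
    set K : Fin n → Lex (Fin n × Fin n) := fun l => toLex (g l, π l) with hKdef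
    have hKinj : Function.Injective K := by
      intro a b hab
      have h2 : (g a, π a) = (g b, π b) := congrArg ofLex hab
      exact π.injective (congrArg Prod.snd h2)
    have hbij := rkF_bijective hKinj
    set τ : Equiv.Perm (Fin n) := Equiv.ofBijective _ hbij with hτdef
    have hτap : ∀ i, τ i = rkF K i := fun i => rfl
    set σ : Equiv.Perm (Fin n) := π * τ⁻¹ with hσdef
    have hmul : σ * τ = π := by rw [hσdef]; group
    have hπσ : ∀ p : Fin n, σ p = π (τ.symm p) := fun p => rfl
    have hord : ∀ i j, τ i < τ j ↔ K i < K j := by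
      intro i j
      rw [hτap, hτap]
      exact rkN_lt_iff hKinj
    have hτcard : ∀ i, (τ i : ℕ) = (univ.filter fun l => K l < K i).card := fun i => rfl
    have hKlt : ∀ l i, K l < K i ↔ (g l < g i ∨ (g l = g i ∧ π l < π i)) := by
      intro l i
      rw [hKdef]
      exact Prod.Lex.lt_iff
    -- blkF S (τ i) = g i
    have hgτ : ∀ i, blkF S (τ i) = g i := by
      intro i
      apply blkF_eq_of_between S
      · have e1 : (univ.filter fun p => blkF S p < g i).card
            = (univ.filter fun l => g l < g i).card :=
          (card_filter_comp_eq hfib (fun x => x < g i)).symm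
        rw [e1, hτcard]
        apply Finset.card_le_card
        intro l hl
        simp only [mem_filter, mem_univ, true_and] at hl ⊢
        rw [hKlt]
        exact Or.inl hl
      · have e1 : (univ.filter fun p => blkF S p ≤ g i).card
            = (univ.filter fun l => g l ≤ g i).card :=
          (card_filter_comp_eq hfib (fun x => x ≤ g i)).symm
        rw [e1, hτcard]
        apply Finset.card_lt_card
        refine (Finset.ssubset_iff_of_subset ?_).mpr ⟨i, by simp, ?_⟩
        · intro l hl
          simp only [mem_filter, mem_univ, true_and] at hl ⊢
          rw [hKlt] at hl
          rcases hl with h | ⟨h, -⟩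
          · exact le_of_lt h
          · exact le_of_eq h
        · simp only [mem_filter, mem_univ, true_and]
          rw [hKlt]
          simp
    have hDτ : Des τ ⊆ T := by
      intro i hi
      by_contra hiT
      obtain ⟨hh, hdes⟩ := of_mem_Des hi
      set j : Fin n := ⟨(i:ℕ)+1, hh⟩ with hjdef
      have hKij : K i < K j := by
        rw [hKlt]
        rcases hadj i j rfl hiT with h | ⟨h, hD⟩
        · exact Or.inl h
        · refine Or.inr ⟨h, ?_⟩
          rcases lt_trichotomy (π i) (π j) with h1 | h1 | h1
          · exact h1
          · exact absurd (π.injective h1) (by simp [hjdef, Fin.ext_iff])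
          · exact absurd h1 (by
              intro hcon
              exact hD (mem_Des.mpr (by rw [desAt, dif_pos hh]; simpa using hcon)))
      have := (hord i j).mpr hKij
      exact absurd hdes (asymm this)
    have hDσ : Des σ ⊆ S := by
      intro p hp
      by_contra hpS
      obtain ⟨hh, hdes⟩ := of_mem_Des hp
      set p1 : Fin n := ⟨(p:ℕ)+1, hh⟩ with hp1def
      set i : Fin n := τ.symm p with hidef
      set i' : Fin n := τ.symm p1 with hi'def
      have hτi : τ i = p := τ.apply_symm_apply p
      have hτi' : τ i' = p1 := τ.apply_symm_apply p1
      have hlt : τ i < τ i' := by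
        rw [hτi, hτi']
        simp [hp1def, Fin.lt_def]
      have hK := (hord i i').mp hlt
      rw [hKlt] at hK
      have hgi : g i = g i' := by
        rw [← hgτ i, ← hgτ i', hτi, hτi']
        exact blkF_succ_eq S p hh hpS
      rcases hK with h | ⟨-, h⟩
      · rw [hgi] at h; exact lt_irrefl _ h
      · have : σ p < σ p1 := by
          rw [hπσ, hπσ, ← hidef, ← hi'def]
          exact h
        exact absurd hdes (asymm this)
    refine ⟨(σ, τ), ?_, ?_⟩
    · rw [PairsLE, mem_filter]
      exact ⟨mem_univ _, hDσ, hDτ, hmul⟩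
    · funext i
      exact hgτ i

lemma card_PairsLE_congr {S T : Finset (Fin n)} {π π' : Equiv.Perm (Fin n)}
    (hD : Des π = Des π') : (PairsLE S T π).card = (PairsLE S T π').card := by
  rw [card_PairsLE_eq, card_PairsLE_eq, hD]

lemma card_PairsLE_sum (S T : Finset (Fin n)) (π : Equiv.Perm (Fin n)) :
    (PairsLE S T π).card
      = ∑ b ∈ S.powerset ×ˢ T.powerset, (PairsE b.1 b.2 π).card := by
  rw [Finset.card_eq_sum_card_fiberwise
    (f := fun pr => (Des pr.1, Des pr.2)) (t := S.powerset ×ˢ T.powerset)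
    (fun x hx => by
      rw [Finset.mem_coe, PairsLE, mem_filter] at hx
      simp only [Finset.mem_coe, Finset.mem_product, Finset.mem_powerset]
      exact ⟨hx.2.1, hx.2.2.1⟩)]
  apply Finset.sum_congr rfl
  intro b hb
  simp only [Finset.mem_product, Finset.mem_powerset] at hb
  congr 1
  ext pr
  rw [PairsE, Finset.mem_filter, Finset.mem_filter, PairsLE, Finset.mem_filter]
  constructor
  · rintro ⟨⟨h0, -, -, hm⟩, he⟩
    rw [Prod.mk.injEq] at he
    exact ⟨h0, he.1, he.2, hm⟩
  · rintro ⟨h0, h1, h2, hm⟩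
    exact ⟨⟨h0, h1 ▸ hb.1, h2 ▸ hb.2, hm⟩, by rw [Prod.mk.injEq]; exact ⟨h1, h2⟩⟩

lemma card_PairsE_congr {π π' : Equiv.Perm (Fin n)} (hD : Des π = Des π')
    (S T : Finset (Fin n)) : (PairsE S T π).card = (PairsE S T π').card := by
  suffices H : ∀ M (S T : Finset (Fin n)), S.card + T.card ≤ M →
      (PairsE S T π).card = (PairsE S T π').card from H _ S T le_rfl
  intro M
  induction M using Nat.strong_induction_on with
  | _ M ih =>
    intro S T hle
    have hmem : (S, T) ∈ S.powerset ×ˢ T.powerset := by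
      simp [Finset.mem_product]
    have hsum := card_PairsLE_sum S T π
    have hsum' := card_PairsLE_sum S T π'
    rw [← Finset.add_sum_erase _ _ hmem] at hsum hsum'
    have herase : ∑ b ∈ (S.powerset ×ˢ T.powerset).erase (S, T), (PairsE b.1 b.2 π).card
        = ∑ b ∈ (S.powerset ×ˢ T.powerset).erase (S, T), (PairsE b.1 b.2 π').card := by
      apply Finset.sum_congr rfl
      intro b hb
      have hbne := Finset.ne_of_mem_erase hb
      have hbmem := Finset.mem_of_mem_erase hb
      simp only [Finset.mem_product, Finset.mem_powerset] at hbmem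
      have hlt : b.1.card + b.2.card < S.card + T.card := by
        have h1 := Finset.card_le_card hbmem.1
        have h2 := Finset.card_le_card hbmem.2
        rcases lt_or_eq_of_le h1 with h | h
        · omega
        · rcases lt_or_eq_of_le h2 with h' | h'
          · omega
          · exfalso
            apply hbne
            have e1 : b.1 = S := Finset.eq_of_subset_of_card_le hbmem.1 (le_of_eq h.symm)
            have e2 : b.2 = T := Finset.eq_of_subset_of_card_le hbmem.2 (le_of_eq h'.symm)
            rw [← e1, ← e2]
      exact ih (b.1.card + b.2.card) (lt_of_lt_of_le hlt hle) b.1 b.2 le_rfl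
    have hLE := card_PairsLE_congr (S := S) (T := T) hD
    rw [hsum, hsum'] at hLE
    rw [herase] at hLE
    exact Nat.add_right_cancel hLE

theorem main_aux (n : ℕ) (α β : List ℕ)
    (π π' : Equiv.Perm (Fin n)) (hD : Des π = Des π') :
    (Finset.univ.filter (fun p : Equiv.Perm (Fin n) × Equiv.Perm (Fin n) =>
        descComp p.1 = α ∧ descComp p.2 = β ∧ p.1 * p.2 = π)).card =
    (Finset.univ.filter (fun p : Equiv.Perm (Fin n) × Equiv.Perm (Fin n) =>
        descComp p.1 = α ∧ descComp p.2 = β ∧ p.1 * p.2 = π')).card := by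
  classical
  have key : ∀ (ρ : Equiv.Perm (Fin n)) (b : Finset (Fin n) × Finset (Fin n)),
      (Finset.univ.filter (fun p : Equiv.Perm (Fin n) × Equiv.Perm (Fin n) =>
        descComp p.1 = α ∧ descComp p.2 = β ∧ p.1 * p.2 = ρ)).filter
          (fun pr => (Des pr.1, Des pr.2) = b)
      = if (∃ σ₀ : Equiv.Perm (Fin n), Des σ₀ = b.1 ∧ descComp σ₀ = α) ∧
           (∃ τ₀ : Equiv.Perm (Fin n), Des τ₀ = b.2 ∧ descComp τ₀ = β)
        then PairsE b.1 b.2 ρ else ∅ := by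
    intro ρ b
    by_cases hcond : (∃ σ₀ : Equiv.Perm (Fin n), Des σ₀ = b.1 ∧ descComp σ₀ = α) ∧
        (∃ τ₀ : Equiv.Perm (Fin n), Des τ₀ = b.2 ∧ descComp τ₀ = β)
    · rw [if_pos hcond]
      obtain ⟨⟨σ₀, hσ₀D, hσ₀c⟩, ⟨τ₀, hτ₀D, hτ₀c⟩⟩ := hcond
      ext pr
      rw [Finset.mem_filter, Finset.mem_filter, PairsE, Finset.mem_filter]
      constructor
      · rintro ⟨⟨h0, -, -, hm⟩, he⟩
        rw [Prod.mk.injEq] at he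
        exact ⟨h0, he.1, he.2, hm⟩
      · rintro ⟨h0, h1, h2, hm⟩
        refine ⟨⟨h0, ?_, ?_, hm⟩, by rw [Prod.mk.injEq]; exact ⟨h1, h2⟩⟩
        · rw [← hσ₀c]
          exact descComp_eq_of_Des_eq (h1.trans hσ₀D.symm)
        · rw [← hτ₀c]
          exact descComp_eq_of_Des_eq (h2.trans hτ₀D.symm)
    · rw [if_neg hcond]
      ext pr
      simp only [Finset.mem_filter, Finset.notMem_empty, iff_false]
      rintro ⟨⟨-, h1, h2, -⟩, he⟩
      rw [Prod.mk.injEq] at he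
      exact hcond ⟨⟨pr.1, he.1, h1⟩, ⟨pr.2, he.2, h2⟩⟩
  rw [Finset.card_eq_sum_card_fiberwise
    (f := fun pr => (Des pr.1, Des pr.2))
    (t := (Finset.univ : Finset (Finset (Fin n))) ×ˢ Finset.univ)
    (fun x _ => by simp)]
  rw [Finset.card_eq_sum_card_fiberwise
    (f := fun pr => (Des pr.1, Des pr.2))
    (t := (Finset.univ : Finset (Finset (Fin n))) ×ˢ Finset.univ)
    (fun x _ => by simp)]
  apply Finset.sum_congr rfl
  intro b _
  rw [key π b, key π' b]
  split
  · exact card_PairsE_congr hD b.1 b.2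
  · rfl

end SCWD

/-- The number of pairs `(σ,τ)` with `C(σ) = α`, `C(τ) = β` and `στ = π`
depends only on the descent composition of `π`, not on `π` itself. -/
theorem structure_constant_well_defined (n : ℕ) (α β γ : List ℕ)
    (π π' : Equiv.Perm (Fin n)) (hπ : descComp π = γ) (hπ' : descComp π' = γ) :
    (Finset.univ.filter (fun p : Equiv.Perm (Fin n) × Equiv.Perm (Fin n) =>
        descComp p.1 = α ∧ descComp p.2 = β ∧ p.1 * p.2 = π)).card =
    (Finset.univ.filter (fun p : Equiv.Perm (Fin n) × Equiv.Perm (Fin n) =>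
        descComp p.1 = α ∧ descComp p.2 = β ∧ p.1 * p.2 = π')).card := by
  exact SCWD.main_aux n α β π π' (SCWD.Des_eq_of_descComp_eq (hπ.trans hπ'.symm))
end
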